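/- Let α ∈ (0,∞), β ∈ (-∞, α], and let ψ : [0,∞) → [0,∞) be a majorant (continuous, increasing, ψ(0)=0, and ψ(t)/t non-increasing for t>0) with ψ positive on (0,∞). Then ω(t) = 1/ψ((1-t²)^α (log(e/(1-t²)))^β) is a doubling weight on [0,1). -/

import Mathlib

open Set Real

lemma aux_log_esub {u : ℝ} (hu : 0 < u) :
    Real.log (Real.exp 1 / u) = 1 - Real.log u := by
  rw [Real.log_div (Real.exp_ne_zero 1) hu.ne', Real.log_exp]

lemma aux_h_pos {α β : ℝ} {u : ℝ} (hu : 0 < u) (hu1 : u ≤ 1) :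
    0 < u ^ α * (1 - Real.log u) ^ β := by
  have h := Real.log_nonpos hu.le hu1
  have h1 : (0:ℝ) < 1 - Real.log u := by linarith
  exact mul_pos (Real.rpow_pos_of_pos hu α) (Real.rpow_pos_of_pos h1 β)

lemma aux_h_mono {α β : ℝ} (hα : 0 < α) (hβ : β ≤ α) {u v : ℝ}
    (hu : 0 < u) (huv : u ≤ v) (hv : v ≤ 1) :
    u ^ α * (1 - Real.log u) ^ β ≤ v ^ α * (1 - Real.log v) ^ β := by
  have hv0 : 0 < v := hu.trans_le huv
  have hlu : Real.log u ≤ 0 := Real.log_nonpos hu.le (huv.trans hv)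
  have hlv : Real.log v ≤ 0 := Real.log_nonpos hv0.le hv
  have h1u : (0:ℝ) < 1 - Real.log u := by linarith
  have h1v : (0:ℝ) < 1 - Real.log v := by linarith
  have hluv : Real.log u ≤ Real.log v := Real.log_le_log hu huv
  rw [Real.rpow_def_of_pos hu, Real.rpow_def_of_pos hv0,
      Real.rpow_def_of_pos h1u, Real.rpow_def_of_pos h1v,
      ← Real.exp_add, ← Real.exp_add]
  apply Real.exp_le_exp.2
  have hD0 : Real.log (1 - Real.log v) ≤ Real.log (1 - Real.log u) :=
    Real.log_le_log h1v (by linarith)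
  have hDup : Real.log (1 - Real.log u) - Real.log (1 - Real.log v)
      ≤ Real.log v - Real.log u := by
    have h1 : Real.log (1 - Real.log u) - Real.log (1 - Real.log v)
        = Real.log ((1 - Real.log u) / (1 - Real.log v)) :=
      (Real.log_div h1u.ne' h1v.ne').symm
    have h2 : Real.log ((1 - Real.log u) / (1 - Real.log v))
        ≤ (1 - Real.log u) / (1 - Real.log v) - 1 :=
      Real.log_le_sub_one_of_pos (by positivity)
    have h3 : (1 - Real.log u) / (1 - Real.log v) - 1
        = (Real.log v - Real.log u) / (1 - Real.log v) := by field_simp; ring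
    have h4 : (Real.log v - Real.log u) / (1 - Real.log v) ≤ Real.log v - Real.log u :=
      div_le_self (by linarith) (by linarith)
    linarith
  nlinarith [mul_le_mul_of_nonneg_right hβ
      (sub_nonneg.2 hD0 : 0 ≤ Real.log (1 - Real.log u) - Real.log (1 - Real.log v)),
    mul_le_mul_of_nonneg_left hDup hα.le]

lemma aux_h_doubling {α β : ℝ} (hα : 0 < α) {u v : ℝ}
    (hv : 0 < v) (hvu : v ≤ u) (hu2 : u ≤ 2 * v) (hu1 : u ≤ 1) :
    u ^ α * (1 - Real.log u) ^ β ≤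
      Real.exp (α * Real.log 2 + |β| * Real.log (1 + Real.log 2)) *
        (v ^ α * (1 - Real.log v) ^ β) := by
  have hu0 : 0 < u := hv.trans_le hvu
  have hlu : Real.log u ≤ 0 := Real.log_nonpos hu0.le hu1
  have hlv : Real.log v ≤ 0 := Real.log_nonpos hv.le (hvu.trans hu1)
  have h1u : (0:ℝ) < 1 - Real.log u := by linarith
  have h1v : (0:ℝ) < 1 - Real.log v := by linarith
  have hl2 : 0 < Real.log 2 := Real.log_pos one_lt_two
  have hlvu : Real.log v ≤ Real.log u := Real.log_le_log hv hvu
  have hlog2 : Real.log u ≤ Real.log 2 + Real.log v := by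
    have : Real.log u ≤ Real.log (2 * v) := Real.log_le_log hu0 hu2
    rwa [Real.log_mul (by norm_num) hv.ne'] at this
  -- Δ' = log(1-log v) - log(1-log u) ∈ [0, log(1+log2)]
  have hD0 : Real.log (1 - Real.log u) ≤ Real.log (1 - Real.log v) :=
    Real.log_le_log h1u (by linarith)
  have hDle : Real.log (1 - Real.log v) ≤ Real.log (1 - Real.log u) + Real.log (1 + Real.log 2) := by
    have hb : 1 - Real.log v ≤ (1 - Real.log u) * (1 + Real.log 2) := by nlinarith
    have := Real.log_le_log h1v hb
    rwa [Real.log_mul h1u.ne' (by linarith)] at this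
  rw [Real.rpow_def_of_pos hu0, Real.rpow_def_of_pos hv,
      Real.rpow_def_of_pos h1u, Real.rpow_def_of_pos h1v,
      ← Real.exp_add, ← Real.exp_add, ← Real.exp_add]
  apply Real.exp_le_exp.2
  have habs : -β ≤ |β| := neg_le_abs β
  have habs2 : 0 ≤ |β| := abs_nonneg β
  nlinarith [mul_le_mul_of_nonneg_left (show Real.log u - Real.log v ≤ Real.log 2 by linarith) hα.le,
    mul_le_mul_of_nonneg_right habs
      (sub_nonneg.2 hD0 : 0 ≤ Real.log (1 - Real.log v) - Real.log (1 - Real.log u)),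
    mul_le_mul_of_nonneg_left
      (show Real.log (1 - Real.log v) - Real.log (1 - Real.log u) ≤ Real.log (1 + Real.log 2) by linarith)
      habs2]

lemma aux_h_bound {α β : ℝ} (hα : 0 < α) :
    ∃ C₀ : ℝ, 0 < C₀ ∧ ∀ u : ℝ, 0 < u → u ≤ 1 →
      u ^ α * (1 - Real.log u) ^ β ≤ C₀ * u ^ (α / 2) := by
  rcases le_or_gt β 0 with hb | hb
  · refine ⟨1, one_pos, fun u hu hu1 => ?_⟩
    have hlu := Real.log_nonpos hu.le hu1
    have h1 : (1 - Real.log u) ^ β ≤ 1 :=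
      Real.rpow_le_one_of_one_le_of_nonpos (by linarith) hb
    have h2 : u ^ α ≤ u ^ (α / 2) :=
      Real.rpow_le_rpow_of_exponent_ge hu hu1 (by linarith)
    calc u ^ α * (1 - Real.log u) ^ β ≤ u ^ α * 1 :=
          mul_le_mul_of_nonneg_left h1 (Real.rpow_nonneg hu.le α)
      _ = u ^ α := mul_one _
      _ ≤ 1 * u ^ (α / 2) := by rw [one_mul]; exact h2
  · set ε := α / (2 * β) with hε
    have hεpos : 0 < ε := by positivity
    refine ⟨((ε + 1) / ε) ^ β, Real.rpow_pos_of_pos (by positivity) β, fun u hu hu1 => ?_⟩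
    have hlu := Real.log_nonpos hu.le hu1
    have hle : Real.log (u ^ (-ε)) ≤ u ^ (-ε) - 1 :=
      Real.log_le_sub_one_of_pos (Real.rpow_pos_of_pos hu _)
    rw [Real.log_rpow hu] at hle
    have h1u : 1 ≤ u ^ (-ε) :=
      Real.one_le_rpow_of_pos_of_le_one_of_nonpos hu hu1 (by linarith)
    have hkey : 1 - Real.log u ≤ (ε + 1) / ε * u ^ (-ε) := by
      rw [div_mul_eq_mul_div, le_div_iff₀ hεpos]
      nlinarith [mul_le_mul_of_nonneg_left h1u hεpos.le]
    have h2 : (1 - Real.log u) ^ β ≤ ((ε + 1) / ε * u ^ (-ε)) ^ β :=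
      Real.rpow_le_rpow (by linarith) hkey hb.le
    have h3 : ((ε + 1) / ε * u ^ (-ε)) ^ β = ((ε + 1) / ε) ^ β * u ^ (-ε * β) := by
      rw [Real.mul_rpow (by positivity) (by positivity), ← Real.rpow_mul hu.le]
    have hεβ : -ε * β = -(α / 2) := by
      rw [hε]; field_simp
    calc u ^ α * (1 - Real.log u) ^ β
        ≤ u ^ α * (((ε + 1) / ε) ^ β * u ^ (-ε * β)) := by
          apply mul_le_mul_of_nonneg_left _ (Real.rpow_nonneg hu.le α)
          rw [← h3]; exact h2
      _ = ((ε + 1) / ε) ^ β * (u ^ α * u ^ (-(α / 2))) := by rw [hεβ]; ring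
      _ = ((ε + 1) / ε) ^ β * u ^ (α / 2) := by
          rw [← Real.rpow_add hu]
          congr 1; ring

theorem majorant_weight_doubling (α β : ℝ) (hα : 0 < α) (hβ : β ≤ α)
    (ψ : ℝ → ℝ)
    (hψc : ContinuousOn ψ (Ici 0))
    (hψm : StrictMonoOn ψ (Ici 0))
    (hψ0 : ψ 0 = 0)
    (hψpos : ∀ t : ℝ, 0 < t → 0 < ψ t)
    (hψmaj : ∀ s t : ℝ, 0 < s → s ≤ t → ψ t / t ≤ ψ s / s)
    (ω : ℝ → ℝ)
    (hω : ∀ t, ω t = 1 / ψ ((1 - t ^ 2) ^ α * (Real.log (Real.exp 1 / (1 - t ^ 2))) ^ β)) :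
    ContinuousOn ω (Ico 0 1) ∧
    MonotoneOn ω (Ico 0 1) ∧
    (∀ x ∈ Ico (0:ℝ) 1, 0 < ω x) ∧
    (∀ M : ℝ, ∃ x ∈ Ico (0:ℝ) 1, M < ω x) ∧
    ∃ C : ℝ, 1 < C ∧ ∀ s ∈ Ioc (0:ℝ) 1, ω (1 - s / 2) < C * ω (1 - s) := by
  have key : ∀ t : ℝ, 0 < 1 - t ^ 2 →
      ω t = 1 / ψ ((1 - t ^ 2) ^ α * (1 - Real.log (1 - t ^ 2)) ^ β) := by
    intro t ht
    rw [hω, aux_log_esub ht]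
  have hut : ∀ t ∈ Ico (0:ℝ) 1, 0 < 1 - t ^ 2 ∧ 1 - t ^ 2 ≤ 1 := by
    intro t ht
    obtain ⟨h0, h1⟩ := ht
    constructor <;> nlinarith
  have hGpos : ∀ t ∈ Ico (0:ℝ) 1,
      0 < (1 - t ^ 2) ^ α * (1 - Real.log (1 - t ^ 2)) ^ β := fun t ht =>
    aux_h_pos (hut t ht).1 (hut t ht).2
  have hψGpos : ∀ t ∈ Ico (0:ℝ) 1,
      0 < ψ ((1 - t ^ 2) ^ α * (1 - Real.log (1 - t ^ 2)) ^ β) := fun t ht =>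
    hψpos _ (hGpos t ht)
  refine ⟨?_, ?_, ?_, ?_, ?_⟩
  · -- continuity
    have hsq : ContinuousOn (fun t : ℝ => 1 - t ^ 2) (Ico 0 1) :=
      continuousOn_const.sub ((continuous_pow 2).continuousOn)
    have hbase1 : ContinuousOn (fun t : ℝ => (1 - t ^ 2) ^ α) (Ico 0 1) :=
      hsq.rpow_const (fun t ht => Or.inl (hut t ht).1.ne')
    have hlogc : ContinuousOn (fun t : ℝ => Real.log (Real.exp 1 / (1 - t ^ 2))) (Ico 0 1) :=
      ContinuousOn.log (continuousOn_const.div hsq (fun t ht => (hut t ht).1.ne'))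
        (fun t ht => div_ne_zero (Real.exp_ne_zero 1) (hut t ht).1.ne')
    have hbase2 : ContinuousOn
        (fun t : ℝ => (Real.log (Real.exp 1 / (1 - t ^ 2))) ^ β) (Ico 0 1) := by
      apply hlogc.rpow_const
      intro t ht
      left
      rw [aux_log_esub (hut t ht).1]
      have := Real.log_nonpos (hut t ht).1.le (hut t ht).2
      intro h
      linarith [h.symm.le]
    have hF : ContinuousOn
        (fun t : ℝ => (1 - t ^ 2) ^ α * (Real.log (Real.exp 1 / (1 - t ^ 2))) ^ β)
        (Ico 0 1) := hbase1.mul hbase2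
    have hcomp : ContinuousOn
        (fun t : ℝ => ψ ((1 - t ^ 2) ^ α * (Real.log (Real.exp 1 / (1 - t ^ 2))) ^ β))
        (Ico 0 1) := by
      apply hψc.comp hF
      intro t ht
      have := hGpos t ht
      rw [← aux_log_esub (hut t ht).1] at this
      exact mem_Ici.2 this.le
    have hne : ∀ t ∈ Ico (0:ℝ) 1,
        ψ ((1 - t ^ 2) ^ α * (Real.log (Real.exp 1 / (1 - t ^ 2))) ^ β) ≠ 0 := by
      intro t ht
      have := hψGpos t ht
      rw [← aux_log_esub (hut t ht).1] at this
      exact this.ne'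
    exact (continuousOn_const.div hcomp hne).congr (fun t ht => hω t)
  · -- monotone
    intro x hx y hy hxy
    rw [key x (hut x hx).1, key y (hut y hy).1]
    have h1 : 1 - y ^ 2 ≤ 1 - x ^ 2 := by nlinarith [hx.1]
    have hG := aux_h_mono hα hβ (hut y hy).1 h1 (hut x hx).2
    exact one_div_le_one_div_of_le (hψGpos y hy)
      (hψm.monotoneOn (mem_Ici.2 (hGpos y hy).le) (mem_Ici.2 (hGpos x hx).le) hG)
  · -- positivity
    intro x hx
    rw [key x (hut x hx).1]
    exact one_div_pos.2 (hψGpos x hx)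
  · -- unbounded
    intro M
    obtain ⟨C₀, hC₀, hCb⟩ := aux_h_bound (β := β) hα
    have htend : Filter.Tendsto ψ (nhdsWithin 0 (Ici 0)) (nhds 0) := by
      have := hψc 0 (mem_Ici.2 le_rfl)
      rwa [ContinuousWithinAt, hψ0] at this
    have hεpos : 0 < 1 / (max M 0 + 1) := by positivity
    have hev : ∀ᶠ y in nhdsWithin 0 (Ici 0), ψ y < 1 / (max M 0 + 1) :=
      htend.eventually_lt_const hεpos
    have hev2 : ∀ᶠ y in nhdsWithin (0:ℝ) (Ioi 0), ψ y < 1 / (max M 0 + 1) :=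
      hev.filter_mono (nhdsWithin_mono 0 Ioi_subset_Ici_self)
    obtain ⟨δ, hψδ, hδpos⟩ := (hev2.and eventually_mem_nhdsWithin).exists
    rw [mem_Ioi] at hδpos
    set u : ℝ := min 1 ((δ / C₀) ^ (2 / α)) with hudef
    have hupos : 0 < u := lt_min one_pos (Real.rpow_pos_of_pos (by positivity) _)
    have hu1 : u ≤ 1 := min_le_left _ _
    have huδ : C₀ * u ^ (α / 2) ≤ δ := by
      have h1 : u ^ (α / 2) ≤ ((δ / C₀) ^ (2 / α)) ^ (α / 2) :=
        Real.rpow_le_rpow hupos.le (min_le_right _ _) (by positivity)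
      rw [← Real.rpow_mul (by positivity)] at h1
      have he : 2 / α * (α / 2) = 1 := by field_simp
      rw [he, Real.rpow_one] at h1
      calc C₀ * u ^ (α / 2) ≤ C₀ * (δ / C₀) :=
            mul_le_mul_of_nonneg_left h1 hC₀.le
        _ = δ := by field_simp
    set x := Real.sqrt (1 - u) with hxdef
    have hxu : 1 - x ^ 2 = u := by
      rw [hxdef, Real.sq_sqrt (by linarith)]; ring
    have hx01 : x ∈ Ico (0:ℝ) 1 := by
      refine ⟨Real.sqrt_nonneg _, ?_⟩
      have : Real.sqrt (1 - u) < Real.sqrt 1 := Real.sqrt_lt_sqrt (by linarith) (by linarith)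
      simpa [hxdef] using this
    refine ⟨x, hx01, ?_⟩
    rw [key x (by rw [hxu]; exact hupos), hxu]
    have hGle : u ^ α * (1 - Real.log u) ^ β ≤ δ := le_trans (hCb u hupos hu1) huδ
    have hGp : 0 < u ^ α * (1 - Real.log u) ^ β := aux_h_pos hupos hu1
    have hψle : ψ (u ^ α * (1 - Real.log u) ^ β) ≤ ψ δ :=
      hψm.monotoneOn (mem_Ici.2 hGp.le) (mem_Ici.2 hδpos.le) hGle
    have hψGp : 0 < ψ (u ^ α * (1 - Real.log u) ^ β) := hψpos _ hGp
    have h1 : ψ (u ^ α * (1 - Real.log u) ^ β) < 1 / (max M 0 + 1) :=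
      lt_of_le_of_lt hψle hψδ
    have h2 := one_div_lt_one_div_of_lt hψGp h1
    rw [one_div_one_div] at h2
    have : M ≤ max M 0 := le_max_left _ _
    linarith
  · -- doubling
    set K := Real.exp (α * Real.log 2 + |β| * Real.log (1 + Real.log 2)) with hK
    have hl2 : 0 < Real.log 2 := Real.log_pos one_lt_two
    have hK1 : 1 ≤ K := by
      rw [hK]
      apply Real.one_le_exp
      have h2 : 0 ≤ Real.log (1 + Real.log 2) := Real.log_nonneg (by linarith)
      have := abs_nonneg β
      positivity
    refine ⟨K + 1, by linarith, ?_⟩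
    intro s hs
    obtain ⟨hs0, hs1⟩ := hs
    have hu₂pos : 0 < 1 - (1 - s / 2) ^ 2 := by nlinarith
    have hu₁pos : 0 < 1 - (1 - s) ^ 2 := by nlinarith
    have h21 : 1 - (1 - s / 2) ^ 2 ≤ 1 - (1 - s) ^ 2 := by nlinarith
    have h12 : 1 - (1 - s) ^ 2 ≤ 2 * (1 - (1 - s / 2) ^ 2) := by nlinarith
    have h11 : 1 - (1 - s) ^ 2 ≤ 1 := by nlinarith
    rw [key _ hu₂pos, key _ hu₁pos]
    set A := (1 - (1 - s) ^ 2) ^ α * (1 - Real.log (1 - (1 - s) ^ 2)) ^ β with hA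
    set B := (1 - (1 - s / 2) ^ 2) ^ α * (1 - Real.log (1 - (1 - s / 2) ^ 2)) ^ β with hB
    have hAB : A ≤ K * B := aux_h_doubling hα hu₂pos h21 h12 h11
    have hApos : 0 < A := aux_h_pos hu₁pos h11
    have hBpos : 0 < B := aux_h_pos hu₂pos (h21.trans h11)
    have hψB : 0 < ψ B := hψpos _ hBpos
    have hψA : 0 < ψ A := hψpos _ hApos
    have hKB : 0 < K * B := by positivity
    have hstep : ψ A ≤ K * ψ B := by
      have hm1 : ψ A ≤ ψ (K * B) :=
        hψm.monotoneOn (mem_Ici.2 hApos.le) (mem_Ici.2 hKB.le) hAB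
      have hm2 := hψmaj B (K * B) hBpos (le_mul_of_one_le_left hBpos.le hK1)
      rw [div_le_div_iff₀ hKB hBpos] at hm2
      nlinarith [hψpos (K * B) hKB]
    rw [mul_one_div, div_lt_div_iff₀ hψB hψA]
    nlinarith
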